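/- arXiv:0709.4676 — 4 statements merged into one kernel-verified Lean document; each statement's English description precedes it below -/
import Mathlib

section
/- For all natural numbers n ≥ k ≥ 1, C(n,k) ≤ n^{ω(C(n,k))}, where ω(m) is the number of distinct prime divisors of m. -/
theorem stmt_4 (n k : ℕ) (hk : 1 ≤ k) (hkn : k ≤ n) :
    n.choose k ≤ n ^ (n.choose k).primeFactors.card := by
  have hn : 0 < n := lt_of_lt_of_le hk hkn
  have hc : n.choose k ≠ 0 := (Nat.choose_pos hkn).ne'
  calc n.choose k
      = ∏ p ∈ (n.choose k).primeFactors, p ^ (n.choose k).factorization p :=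
        (Nat.factorization_prod_pow_eq_self hc).symm
    _ ≤ ∏ _p ∈ (n.choose k).primeFactors, n :=
        Finset.prod_le_prod' fun p _ => Nat.pow_factorization_choose_le hn
    _ = n ^ (n.choose k).primeFactors.card := Finset.prod_const n
end

section
/- For fixed natural numbers n > m ≥ 1, ω(C(nk, mk)) = log(n^n/(m^m (n−m)^{n−m})) · k/log k + o(k/log k) as k → ∞. -/
open Finset Filter Real Asymptotics


lemma Lratio (N a b j : ℕ) (hj : j < N) :
    N.choose (j+1) * a ^ (j+1) * b ^ (N - (j+1)) * ((j+1) * b)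
      = N.choose j * a ^ j * b ^ (N - j) * ((N - j) * a) := by
  have h1 : N.choose (j+1) * (j+1) = N.choose j * (N - j) := Nat.choose_succ_right_eq N j
  have h2 : b ^ (N - (j+1)) * b = b ^ (N - j) := by
    rw [← pow_succ]; congr 1; omega
  calc N.choose (j+1) * a ^ (j+1) * b ^ (N - (j+1)) * ((j+1) * b)
      = (N.choose (j+1) * (j+1)) * a ^ (j+1) * (b ^ (N-(j+1)) * b) := by ring
    _ = (N.choose j * (N - j)) * a ^ (j+1) * b ^ (N - j) := by rw [h1, h2]
    _ = N.choose j * a ^ j * b ^ (N - j) * ((N - j) * a) := by rw [pow_succ]; ring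

-- max term: t j ≤ t (m*k) for all j, where t j = C(nk,j) m^j (n-m)^(nk-j)
lemma Lmax (n m k : ℕ) (hm : 1 ≤ m) (hnm : m < n) (j : ℕ) :
    (n*k).choose j * m ^ j * (n-m) ^ (n*k - j)
      ≤ (n*k).choose (m*k) * m ^ (m*k) * (n-m) ^ (n*k - m*k) := by
  set N := n*k with hN
  set t : ℕ → ℕ := fun j => N.choose j * m ^ j * (n-m) ^ (N - j) with ht
  have hb : 0 < n - m := by omega
  -- increasing below m*k
  have hup : ∀ i, i + 1 ≤ m*k → t i ≤ t (i+1) := by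
    intro i hi
    have hiN : i < N := by
      have : m * k ≤ n * k := Nat.mul_le_mul_right k (le_of_lt hnm)
      omega
    have hr := Lratio N m (n-m) i hiN
    have hineq : (i+1) * (n-m) ≤ (N - i) * m := by
      have h1 : (i+1) * n ≤ m * k * n := Nat.mul_le_mul_right n hi
      have h2 : i < m * k := hi
      have hiN' : i ≤ n * k := le_of_lt hiN
      zify [le_of_lt hnm, le_of_lt hiN, hN, hiN'] at *
      nlinarith
    have : t i * ((i+1) * (n-m)) ≤ t i * ((N - i) * m) := Nat.mul_le_mul_left _ hineq
    rw [← hr] at this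
    exact Nat.le_of_mul_le_mul_right this (by positivity)
  -- decreasing above m*k
  have hdown : ∀ i, m*k ≤ i → t (i+1) ≤ t i := by
    intro i hi
    rcases le_or_gt N i with hNi | hiN
    · have : t (i+1) = 0 := by
        simp [ht, Nat.choose_eq_zero_of_lt (by omega : N < i+1)]
      omega
    · have hr := Lratio N m (n-m) i hiN
      have hineq : (N - i) * m ≤ (i+1) * (n-m) := by
        have h1 : m * k * n ≤ i * n := Nat.mul_le_mul_right n hi
        have hiN' : i ≤ n * k := le_of_lt hiN
        zify [le_of_lt hnm, le_of_lt hiN, hN, hiN'] at *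
        nlinarith
      have : t i * ((N - i) * m) ≤ t i * ((i+1) * (n-m)) := Nat.mul_le_mul_left _ hineq
      rw [← hr] at this
      exact Nat.le_of_mul_le_mul_right this (by positivity)
  -- combine
  show t j ≤ t (m*k)
  have hle : ∀ d, ∀ i, i + d = m*k → t i ≤ t (m*k) := by
    intro d
    induction d with
    | zero => intro i h; simp [← h]
    | succ d ih =>
      intro i h
      exact le_trans (hup i (by omega)) (ih (i+1) (by omega))
  have hge : ∀ i, m*k ≤ i → t i ≤ t (m*k) := by
    intro i hi
    induction i, hi using Nat.le_induction with
    | base => exact le_refl _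
    | succ i hi ih => exact le_trans (hdown i hi) ih
  rcases le_or_gt j (m*k) with h | h
  · exact hle (m*k - j) j (by omega)
  · exact hge j (le_of_lt h)


lemma L1 (N M a b : ℕ) (h : M ≤ N) :
    N.choose M * a ^ M * b ^ (N - M) ≤ (a + b) ^ N := by
  rw [add_pow]
  calc N.choose M * a ^ M * b ^ (N - M) = a ^ M * b ^ (N - M) * N.choose M := by ring
  _ ≤ _ := Finset.single_le_sum (f := fun j => a ^ j * b ^ (N - j) * N.choose j)
      (fun i _ => Nat.zero_le _) (by simp [Nat.lt_succ_iff, h])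


-- lower bound: n^(nk) ≤ (nk+1) * t(mk)
lemma L3 (n m k : ℕ) (hm : 1 ≤ m) (hnm : m < n) :
    n ^ (n*k) ≤ (n*k+1) * ((n*k).choose (m*k) * m ^ (m*k) * (n-m) ^ (n*k - m*k)) := by
  have hn : n = m + (n - m) := by omega
  calc n ^ (n*k) = (m + (n-m)) ^ (n*k) := by rw [← hn]
    _ = ∑ j ∈ range (n*k+1), m ^ j * (n-m) ^ (n*k - j) * (n*k).choose j := add_pow m (n-m) (n*k)
    _ ≤ ∑ j ∈ range (n*k+1), ((n*k).choose (m*k) * m ^ (m*k) * (n-m) ^ (n*k - m*k)) := by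
        refine Finset.sum_le_sum fun j _ => ?_
        calc m ^ j * (n-m) ^ (n*k - j) * (n*k).choose j
            = (n*k).choose j * m ^ j * (n-m) ^ (n*k - j) := by ring
          _ ≤ _ := Lmax n m k hm hnm j
    _ = (n*k+1) * _ := by rw [Finset.sum_const, card_range]; ring



-- upper log bound
lemma L4u (n m k : ℕ) (hm : 1 ≤ m) (hnm : m < n) :
    Real.log ((n*k).choose (m*k))
      ≤ k * ((n:ℝ) * Real.log n - m * Real.log m - ((n:ℝ) - m) * Real.log ((n:ℝ) - m)) := by
  have hmk : m * k ≤ n * k := Nat.mul_le_mul_right k hnm.le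
  have h := L1 (n*k) (m*k) m (n-m) hmk
  rw [(by omega : m + (n - m) = n)] at h
  have hC : 0 < (n*k).choose (m*k) := Nat.choose_pos hmk
  have hmr : (0:ℝ) < m := by positivity
  have hbr : (0:ℝ) < ((n - m : ℕ):ℝ) := by
    have : 1 ≤ n - m := by omega
    exact_mod_cast Nat.lt_of_lt_of_le Nat.zero_lt_one this
  have hr : ((n*k).choose (m*k) : ℝ) * (m:ℝ) ^ (m*k) * ((n-m:ℕ):ℝ) ^ (n*k - m*k)
      ≤ (n:ℝ) ^ (n*k) := by exact_mod_cast h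
  have hCr : (0:ℝ) < ((n*k).choose (m*k) : ℝ) := by exact_mod_cast hC
  have hlog := Real.log_le_log (by positivity) hr
  rw [Real.log_mul (by positivity) (by positivity), Real.log_mul (by positivity) (by positivity),
    Real.log_pow, Real.log_pow, Real.log_pow] at hlog
  have hcast : ((n - m : ℕ):ℝ) = (n:ℝ) - m := by
    push_cast [Nat.cast_sub hnm.le]; ring
  have hcast2 : ((n*k - m*k : ℕ):ℝ) = (n:ℝ)*k - (m:ℝ)*k := by
    push_cast [Nat.cast_sub hmk]; ring
  rw [hcast, hcast2] at hlog
  push_cast at hlog ⊢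
  nlinarith [hlog]

-- lower log bound
lemma L4l (n m k : ℕ) (hm : 1 ≤ m) (hnm : m < n) :
    k * ((n:ℝ) * Real.log n - m * Real.log m - ((n:ℝ) - m) * Real.log ((n:ℝ) - m))
      - Real.log (n*k+1) ≤ Real.log ((n*k).choose (m*k)) := by
  have hmk : m * k ≤ n * k := Nat.mul_le_mul_right k hnm.le
  have h := L3 n m k hm hnm
  have hC : 0 < (n*k).choose (m*k) := Nat.choose_pos hmk
  have hbr : (0:ℝ) < ((n - m : ℕ):ℝ) := by
    have : 1 ≤ n - m := by omega
    exact_mod_cast Nat.lt_of_lt_of_le Nat.zero_lt_one this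
  have hr : (n:ℝ) ^ (n*k)
      ≤ ((n*k:ℕ)+1:ℝ) * (((n*k).choose (m*k) : ℝ) * (m:ℝ) ^ (m*k) * ((n-m:ℕ):ℝ) ^ (n*k - m*k)) := by
    exact_mod_cast h
  have hn0 : (0:ℝ) < n := by
    have : 0 < n := by omega
    exact_mod_cast this
  have hCr : (0:ℝ) < ((n*k).choose (m*k) : ℝ) := by exact_mod_cast hC
  have hmr : (0:ℝ) < m := by positivity
  have hlog := Real.log_le_log (by positivity) hr
  rw [Real.log_mul (by positivity) (by positivity), Real.log_mul (by positivity) (by positivity),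
    Real.log_mul (by positivity) (by positivity),
    Real.log_pow, Real.log_pow, Real.log_pow] at hlog
  have hcast : ((n - m : ℕ):ℝ) = (n:ℝ) - m := by
    push_cast [Nat.cast_sub hnm.le]; ring
  have hcast2 : ((n*k - m*k : ℕ):ℝ) = (n:ℝ)*k - (m:ℝ)*k := by
    push_cast [Nat.cast_sub hmk]; ring
  rw [hcast, hcast2] at hlog
  push_cast at hlog ⊢
  nlinarith [hlog]

-- the constant matches
lemma Lc (n m : ℕ) (hm : 1 ≤ m) (hnm : m < n) :
    Real.log ((n : ℝ) ^ n / ((m : ℝ) ^ m * ((n : ℝ) - m) ^ (n - m)))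
      = (n:ℝ) * Real.log n - m * Real.log m - ((n:ℝ) - m) * Real.log ((n:ℝ) - m) := by
  have hb : (0:ℝ) < (n:ℝ) - m := by
    have : (m:ℝ) < n := by exact_mod_cast hnm
    linarith
  have hn : (0:ℝ) < n := by
    have : 0 < n := by omega
    exact_mod_cast this
  have hmr : (0:ℝ) < m := by
    have : 0 < m := hm
    exact_mod_cast this
  rw [Real.log_div (by positivity) (by positivity),
    Real.log_mul (by positivity) (by positivity), Real.log_pow, Real.log_pow, Real.log_pow]
  have : ((n - m : ℕ):ℝ) = (n:ℝ) - m := by push_cast [Nat.cast_sub hnm.le]; ring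
  rw [this]
  ring


-- lower: log C ≤ ω * log(nk)
lemma Lwlow (n m k : ℕ) (hm : 1 ≤ m) (hnm : m < n) (hk : 1 ≤ k) :
    Real.log ((n*k).choose (m*k))
      ≤ (((n*k).choose (m*k)).primeFactors.card : ℝ) * Real.log (n*k) := by
  set C := (n*k).choose (m*k) with hCdef
  have hmk : m * k ≤ n * k := Nat.mul_le_mul_right k hnm.le
  have hC : C ≠ 0 := (Nat.choose_pos hmk).ne'
  have hnk : 0 < n * k := by
    have : 0 < n := by omega
    exact Nat.mul_pos this hk
  have key : C ≤ (n*k) ^ C.primeFactors.card := by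
    conv_lhs => rw [← Nat.factorization_prod_pow_eq_self hC]
    rw [Finsupp.prod, Nat.support_factorization]
    calc ∏ p ∈ C.primeFactors, p ^ C.factorization p
        ≤ ∏ _p ∈ C.primeFactors, (n*k) := by
          refine Finset.prod_le_prod' fun p _ => ?_
          exact Nat.pow_factorization_choose_le hnk
      _ = (n*k) ^ C.primeFactors.card := by rw [Finset.prod_const]
  have := Real.log_le_log (by exact_mod_cast Nat.pos_of_ne_zero hC)
    (by exact_mod_cast key : (C:ℝ) ≤ ((n*k:ℕ):ℝ) ^ C.primeFactors.card)
  rw [Real.log_pow] at this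
  rw [Nat.cast_mul] at this
  exact this

-- upper: ω ≤ b + log C / log (b+1) for any b ≥ 1, C ≠ 0
lemma Lwhigh (C b : ℕ) (hC : C ≠ 0) (hb : 1 ≤ b) :
    (C.primeFactors.card : ℝ) ≤ b + Real.log C / Real.log (b+1) := by
  have hlogb : (0:ℝ) < Real.log ((b:ℝ)+1) := by
    apply Real.log_pos
    have : (1:ℝ) ≤ b := by exact_mod_cast hb
    linarith
  have hsplit := Finset.card_filter_add_card_filter_not
    (s := C.primeFactors) (p := fun p => p ≤ b)
  -- small primes
  have hsmall : (C.primeFactors.filter (fun p => p ≤ b)).card ≤ b := by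
    have hsub : C.primeFactors.filter (fun p => p ≤ b) ⊆ Finset.Icc 1 b := by
      intro p hp
      simp only [Finset.mem_filter, Nat.mem_primeFactors] at hp
      simp only [Finset.mem_Icc]
      exact ⟨hp.1.1.one_lt.le.trans' (by omega), hp.2⟩
    calc _ ≤ (Finset.Icc 1 b).card := Finset.card_le_card hsub
      _ = b := by rw [Nat.card_Icc]; omega
  -- large primes
  set S := C.primeFactors.filter (fun p => ¬ p ≤ b) with hS
  have hlarge : (S.card : ℝ) ≤ Real.log C / Real.log (b+1) := by
    rw [le_div_iff₀ hlogb]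
    have hdvd : ∏ p ∈ S, p ∣ C :=
      (Finset.prod_dvd_prod_of_subset _ _ _ (Finset.filter_subset _ _)).trans
        (Nat.prod_primeFactors_dvd C)
    have hprodle : (b+1) ^ S.card ≤ C := by
      calc (b+1) ^ S.card = ∏ _p ∈ S, (b+1) := by rw [Finset.prod_const]
        _ ≤ ∏ p ∈ S, p := by
            refine Finset.prod_le_prod' fun p hp => ?_
            simp only [hS, Finset.mem_filter] at hp
            omega
        _ ≤ C := Nat.le_of_dvd (Nat.pos_of_ne_zero hC) hdvd
    have := Real.log_le_log (by positivity)
      (by exact_mod_cast hprodle : ((b:ℝ)+1) ^ S.card ≤ (C:ℝ))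
    rwa [Real.log_pow] at this
  have : (C.primeFactors.card : ℝ)
      = ((C.primeFactors.filter (fun p => p ≤ b)).card : ℝ) + (S.card : ℝ) := by
    exact_mod_cast (hsplit).symm
  rw [this]
  have : ((C.primeFactors.filter (fun p => p ≤ b)).card : ℝ) ≤ b := by exact_mod_cast hsmall
  push_cast at hlarge ⊢
  linarith


-- log k / k → 0 over ℕ
lemma Tld : Tendsto (fun x:ℝ => Real.log x / x) atTop (nhds 0) := by
  have := Real.isLittleO_log_id_atTop.tendsto_div_nhds_zero
  simpa using this

lemma T1 : Tendsto (fun k:ℕ => Real.log k) atTop atTop :=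
  Real.tendsto_log_atTop.comp tendsto_natCast_atTop_atTop

lemma Tinv : Tendsto (fun k:ℕ => (Real.log k)⁻¹) atTop (nhds 0) :=
  T1.inv_tendsto_atTop

-- x k := k/(log k)^2 → ∞
lemma Tx : Tendsto (fun k:ℕ => (k:ℝ)/(Real.log k)^2) atTop atTop := by
  have hsq : (fun x:ℝ => (Real.log x)^2) =o[atTop] (fun x:ℝ => x) :=
    Real.isLittleO_pow_log_id_atTop
  have hdiv : Tendsto (fun x:ℝ => (Real.log x)^2 / x) atTop (nhds 0) :=
    hsq.tendsto_div_nhds_zero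
  have hpos : ∀ᶠ x:ℝ in atTop, 0 < (Real.log x)^2 / x := by
    filter_upwards [eventually_gt_atTop (2:ℝ)] with x hx
    have : 0 < Real.log x := Real.log_pos (by linarith)
    positivity
  have : Tendsto (fun x:ℝ => (Real.log x)^2 / x) atTop (nhdsWithin 0 (Set.Ioi 0)) :=
    tendsto_nhdsWithin_iff.2 ⟨hdiv, hpos⟩
  have hinv : Tendsto (fun x:ℝ => ((Real.log x)^2 / x)⁻¹) atTop atTop :=
    this.inv_tendsto_nhdsGT_zero
  have : Tendsto (fun x:ℝ => x/(Real.log x)^2) atTop atTop := by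
    refine hinv.congr' ?_
    filter_upwards with x
    rw [inv_div]
  exact this.comp tendsto_natCast_atTop_atTop



-- ratio 1 : log k / (log n + log k) → 1
lemma R1 (a : ℝ) (ha : 0 ≤ a) :
    Tendsto (fun k:ℕ => Real.log k / (a + Real.log k)) atTop (nhds 1) := by
  have h : Tendsto (fun k:ℕ => (1 + a * (Real.log k)⁻¹)⁻¹) atTop (nhds 1) := by
    have : Tendsto (fun k:ℕ => 1 + a * (Real.log k)⁻¹) atTop (nhds 1) := by
      have := (Tinv.const_mul a)
      have h2 : Tendsto (fun _:ℕ => (1:ℝ)) atTop (nhds 1) := tendsto_const_nhds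
      simpa using h2.add this
    simpa using this.inv₀ (by norm_num)
  refine h.congr' ?_
  filter_upwards [T1.eventually_gt_atTop 0] with k hk
  have h1 : (0:ℝ) < a + Real.log k := by positivity
  have heq : 1 + a * (Real.log k)⁻¹ = (a + Real.log k) / Real.log k := by
    field_simp
    ring
  rw [heq, inv_div]

-- ratio 2 : log k / (log k - 2 log log k) → 1
lemma R2 : Tendsto (fun k:ℕ => Real.log k / (Real.log k - 2 * Real.log (Real.log k)))
    atTop (nhds 1) := by
  have hr : Tendsto (fun k:ℕ => Real.log (Real.log k) / Real.log k) atTop (nhds 0) :=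
    Tld.comp T1
  have h : Tendsto (fun k:ℕ => (1 - 2 * (Real.log (Real.log k) / Real.log k))⁻¹)
      atTop (nhds 1) := by
    have : Tendsto (fun k:ℕ => 1 - 2 * (Real.log (Real.log k) / Real.log k)) atTop (nhds 1) := by
      have := hr.const_mul (2:ℝ)
      have h2 : Tendsto (fun _:ℕ => (1:ℝ)) atTop (nhds 1) := tendsto_const_nhds
      simpa using h2.sub this
    simpa using this.inv₀ (by norm_num)
  refine h.congr' ?_
  filter_upwards [T1.eventually_gt_atTop 0,
    hr.eventually (gt_mem_nhds (by norm_num : (0:ℝ) < 1/4))] with k hk hk4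
  have h1 : Real.log k - 2 * Real.log (Real.log k) > 0 := by
    have : 2 * (Real.log (Real.log k) / Real.log k) < 2 * (1/4) := by linarith
    have h2 : Real.log (Real.log k) / Real.log k < 1/4 := hk4
    rw [div_lt_iff₀ hk] at h2
    linarith
  have heq : 1 - 2 * (Real.log (Real.log k) / Real.log k)
      = (Real.log k - 2 * Real.log (Real.log k)) / Real.log k := by
    field_simp
  rw [heq, inv_div]

-- error term : log(n k + 1)/k → 0
lemma Terr (n : ℕ) (hn : 1 ≤ n) :
    Tendsto (fun k:ℕ => Real.log ((n:ℝ)*k+1) / k) atTop (nhds 0) := by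
  have hup : Tendsto (fun k:ℕ => Real.log ((n:ℝ)+1) * (k:ℝ)⁻¹ + Real.log k / k)
      atTop (nhds 0) := by
    have h1 : Tendsto (fun k:ℕ => ((k:ℝ))⁻¹) atTop (nhds 0) :=
      tendsto_inv_atTop_zero.comp tendsto_natCast_atTop_atTop
    have h2 : Tendsto (fun k:ℕ => Real.log k / k) atTop (nhds 0) :=
      Tld.comp tendsto_natCast_atTop_atTop
    simpa using (h1.const_mul (Real.log ((n:ℝ)+1))).add h2
  have hlow : Tendsto (fun _:ℕ => (0:ℝ)) atTop (nhds 0) := tendsto_const_nhds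
  refine tendsto_of_tendsto_of_tendsto_of_le_of_le' hlow hup ?_ ?_
  · filter_upwards [eventually_ge_atTop 1] with k hk
    have hk0 : (0:ℝ) < k := by exact_mod_cast hk
    have : (1:ℝ) ≤ (n:ℝ)*k+1 := by
      have : (0:ℝ) ≤ (n:ℝ)*k := by positivity
      linarith
    have := Real.log_nonneg this
    positivity
  · filter_upwards [eventually_ge_atTop 1] with k hk
    have hk1 : (1:ℝ) ≤ (k:ℝ) := by exact_mod_cast hk
    have hk0 : (0:ℝ) < k := by linarith
    have hn1 : (1:ℝ) ≤ (n:ℝ) := by exact_mod_cast hn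
    have hle : (n:ℝ)*k+1 ≤ ((n:ℝ)+1)*k := by nlinarith
    have hlog : Real.log ((n:ℝ)*k+1) ≤ Real.log (((n:ℝ)+1)*k) :=
      Real.log_le_log (by positivity) hle
    rw [Real.log_mul (by positivity) (by positivity)] at hlog
    rw [div_le_iff₀ hk0]
    have : Real.log ((n:ℝ)+1) * (k:ℝ)⁻¹ * k = Real.log ((n:ℝ)+1) := by
      field_simp
    calc Real.log ((n:ℝ)*k+1) ≤ Real.log ((n:ℝ)+1) + Real.log k := hlog
      _ ≤ Real.log ((n:ℝ)+1) + Real.log k / k * k := by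
          rw [div_mul_cancel₀ _ hk0.ne']
      _ = (Real.log ((n:ℝ)+1) * (k:ℝ)⁻¹ + Real.log k / k) * k := by
          field_simp



theorem stmt_14 (n m : ℕ) (hm : 1 ≤ m) (hnm : m < n) :
    (fun k : ℕ =>
        (((n * k).choose (m * k)).primeFactors.card : ℝ) -
          Real.log ((n : ℝ) ^ n / ((m : ℝ) ^ m * ((n : ℝ) - m) ^ (n - m))) *
            ((k : ℝ) / Real.log k))
      =o[Filter.atTop] (fun k : ℕ => (k : ℝ) / Real.log k) := by
  have hn1 : 1 ≤ n := hm.trans hnm.le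
  set cc := (n:ℝ) * Real.log n - m * Real.log m - ((n:ℝ) - m) * Real.log ((n:ℝ) - m) with hccdef
  rw [Lc n m hm hnm]
  set ω : ℕ → ℝ := fun k => (((n * k).choose (m * k)).primeFactors.card : ℝ) with hω
  set Lg : ℕ → ℝ := fun k => Real.log ((n*k).choose (m*k)) with hLg
  -- Step A : Lg k / k → cc
  have TL : Tendsto (fun k:ℕ => Lg k / k) atTop (nhds cc) := by
    have hup : Tendsto (fun _:ℕ => cc) atTop (nhds cc) := tendsto_const_nhds
    have hlow : Tendsto (fun k:ℕ => cc - Real.log ((n:ℝ)*k+1)/k) atTop (nhds cc) := by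
      have := (tendsto_const_nhds (x := cc) (f := atTop (α := ℕ))).sub (Terr n hn1)
      simpa using this
    refine tendsto_of_tendsto_of_tendsto_of_le_of_le' hlow hup ?_ ?_
    · filter_upwards [eventually_ge_atTop 1] with k hk
      have hk0 : (0:ℝ) < k := by exact_mod_cast hk
      have h2 : cc * k - Real.log ((n:ℝ)*k+1) ≤ Lg k := by
        simp only [hLg, hccdef]
        have := L4l n m k hm hnm
        linarith [this]
      have h3 : cc - Real.log ((n:ℝ)*k+1)/k = (cc * k - Real.log ((n:ℝ)*k+1))/k := by
        field_simp
      rw [h3]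
      exact div_le_div_of_nonneg_right h2 hk0.le
    · filter_upwards [eventually_ge_atTop 1] with k hk
      have hk0 : (0:ℝ) < k := by exact_mod_cast hk
      rw [div_le_iff₀ hk0]
      simp only [hLg, hccdef]
      have := L4u n m k hm hnm
      linarith [this]
  -- Step B : squeeze ω k * log k / k → cc
  have H : Tendsto (fun k:ℕ => ω k * Real.log k / k) atTop (nhds cc) := by
    have hlo : Tendsto (fun k:ℕ => (Lg k / k) * (Real.log k / (Real.log n + Real.log k)))
        atTop (nhds cc) := by
      have := TL.mul (R1 (Real.log n) (Real.log_natCast_nonneg n))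
      simpa using this
    have hhi : Tendsto (fun k:ℕ => (Real.log k)⁻¹
        + (Lg k / k) * (Real.log k / (Real.log k - 2 * Real.log (Real.log k))))
        atTop (nhds cc) := by
      have := Tinv.add (TL.mul R2)
      simpa using this
    refine tendsto_of_tendsto_of_tendsto_of_le_of_le' hlo hhi ?_ ?_
    · -- lower bound
      filter_upwards [eventually_ge_atTop 2] with k hk
      have hk1 : (1:ℕ) ≤ k := by omega
      have hk0 : (0:ℝ) < k := by exact_mod_cast Nat.lt_of_lt_of_le Nat.zero_lt_one hk1
      have hkr : (1:ℝ) < k := by exact_mod_cast (by omega : 1 < k)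
      have hlogk : (0:ℝ) < Real.log k := Real.log_pos hkr
      have hn0 : (0:ℝ) < n := by exact_mod_cast (by omega : 0 < n)
      have hw := Lwlow n m k hm hnm hk1
      rw [Real.log_mul hn0.ne' hk0.ne'] at hw
      have hd : (0:ℝ) < Real.log n + Real.log k := by
        have := Real.log_natCast_nonneg n
        linarith
      have h1 : Lg k / (Real.log n + Real.log k) ≤ ω k := by
        rw [div_le_iff₀ hd]
        exact hw
      calc (Lg k / k) * (Real.log k / (Real.log n + Real.log k))
          = Lg k / (Real.log n + Real.log k) * (Real.log k / k) := by ring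
        _ ≤ ω k * (Real.log k / k) :=
            mul_le_mul_of_nonneg_right h1 (by positivity)
        _ = ω k * Real.log k / k := by ring
    · -- upper bound
      filter_upwards [eventually_ge_atTop 2, Tx.eventually_ge_atTop 2] with k hk hx
      have hk0 : (0:ℝ) < k := by exact_mod_cast (by omega : 0 < k)
      have hkr : (1:ℝ) < k := by exact_mod_cast (by omega : 1 < k)
      have hlogk : (0:ℝ) < Real.log k := Real.log_pos hkr
      have hmk : m * k ≤ n * k := Nat.mul_le_mul_right k hnm.le
      have hC : (n*k).choose (m*k) ≠ 0 := (Nat.choose_pos hmk).ne'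
      set x : ℝ := (k:ℝ)/(Real.log k)^2 with hxdef
      set b : ℕ := ⌊x⌋₊ with hbdef
      have hb1 : 1 ≤ b := Nat.le_floor (by push_cast; linarith)
      have hwh := Lwhigh ((n*k).choose (m*k)) b hC hb1
      have hbx : (b:ℝ) ≤ x := Nat.floor_le (by linarith)
      have hxb1 : x ≤ (b:ℝ)+1 := (Nat.lt_floor_add_one x).le
      have hlogx : (0:ℝ) < Real.log x := Real.log_pos (by linarith)
      have hlogble : Real.log x ≤ Real.log ((b:ℝ)+1) := Real.log_le_log (by linarith) hxb1
      have hL0 : 0 ≤ Lg k := Real.log_nonneg (by exact_mod_cast Nat.pos_of_ne_zero hC)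
      have hdivle : Lg k / Real.log ((b:ℝ)+1) ≤ Lg k / Real.log x :=
        div_le_div_of_nonneg_left hL0 hlogx hlogble
      have hωle : ω k ≤ x + Lg k / Real.log x := by
        calc ω k ≤ (b:ℝ) + Lg k / Real.log ((b:ℝ)+1) := by exact_mod_cast hwh
          _ ≤ x + Lg k / Real.log x := add_le_add hbx hdivle
      have hlogxeq : Real.log x = Real.log k - 2 * Real.log (Real.log k) := by
        rw [hxdef, Real.log_div hk0.ne' (by positivity), Real.log_pow]
        push_cast
        ring
      have e1 : x * (Real.log k / k) = (Real.log k)⁻¹ := by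
        rw [hxdef]
        field_simp
      calc ω k * Real.log k / k = ω k * (Real.log k / k) := by ring
        _ ≤ (x + Lg k / Real.log x) * (Real.log k / k) :=
            mul_le_mul_of_nonneg_right hωle (by positivity)
        _ = x * (Real.log k / k) + (Lg k / Real.log x) * (Real.log k / k) := by ring
        _ = (Real.log k)⁻¹ + (Lg k / k) * (Real.log k / Real.log x) := by rw [e1]; ring
        _ = (Real.log k)⁻¹
            + (Lg k / k) * (Real.log k / (Real.log k - 2 * Real.log (Real.log k))) := by
            rw [hlogxeq]
  -- Step C : convert to isLittleO
  rw [Asymptotics.isLittleO_iff_tendsto']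
  · have := H.sub (tendsto_const_nhds (x := cc) (f := atTop (α := ℕ)))
    rw [sub_self] at this
    refine this.congr' ?_
    filter_upwards [eventually_ge_atTop 2] with k hk
    have hk0 : (0:ℝ) < k := by exact_mod_cast (by omega : 0 < k)
    have hkr : (1:ℝ) < k := by exact_mod_cast (by omega : 1 < k)
    have hlogk : (0:ℝ) < Real.log k := Real.log_pos hkr
    field_simp
    ring
  · filter_upwards [eventually_ge_atTop 2] with k hk hzero
    exfalso
    have hk0 : (0:ℝ) < k := by exact_mod_cast (by omega : 0 < k)
    have hkr : (1:ℝ) < k := by exact_mod_cast (by omega : 1 < k)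
    have hlogk : (0:ℝ) < Real.log k := Real.log_pos hkr
    have : (0:ℝ) < (k:ℝ)/Real.log k := by positivity
    rw [hzero] at this
    exact lt_irrefl 0 this
end

section
/- For every integer n ≥ 2, log(n^n/(n−1)^{n−1}) = Σ_{j=0}^{∞} Σ_{i=1}^{n−1} ( 1/(j + i/n) − 1/(j + i/(n−1)) ), where for j = 0 and the term with i/(n−1) = 1 the convention is that only well-defined (finite) terms appear; equivalently the double series converges to n log n − (n−1) log(n−1). -/
open Real Filter Finset Topology

private lemma harm_diff (a k : ℕ) :
    ((harmonic (a + k) : ℝ)) - (harmonic a : ℝ) =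
      ∑ i ∈ Finset.Icc 1 k, (1 : ℝ) / ((a : ℝ) + i) := by
  induction k with
  | zero => simp
  | succ k ih =>
      rw [Finset.sum_Icc_succ_top (by omega), ← ih, ← Nat.add_assoc, harmonic_succ]
      push_cast
      ring

private lemma harmInnerSum (d j k : ℕ) (hd : 1 ≤ d) :
    ∑ i ∈ Finset.Icc 1 k, (1 : ℝ) / ((j : ℝ) + (i : ℝ) / d) =
      (d : ℝ) * ((harmonic (d * j + k) : ℝ) - (harmonic (d * j) : ℝ)) := by
  have hd' : (0 : ℝ) < d := by exact_mod_cast hd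
  rw [harm_diff, Finset.mul_sum]
  apply Finset.sum_congr rfl
  intro i hi
  have hi1 : 1 ≤ i := (Finset.mem_Icc.mp hi).1
  have hpos : (0 : ℝ) < (d : ℝ) * j + i := by positivity
  have key : (j : ℝ) + (i : ℝ) / d = ((d : ℝ) * j + i) / d := by
    field_simp
  rw [key, one_div_div, mul_one_div]
  push_cast
  ring

theorem stmt_18 (n : ℕ) (hn : 2 ≤ n) :
    HasSum
      (fun j : ℕ =>
        ∑ i ∈ Finset.Icc 1 (n - 1),
          ((1 : ℝ) / ((j : ℝ) + (i : ℝ) / n) - 1 / ((j : ℝ) + (i : ℝ) / ((n : ℝ) - 1))))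
      ((n : ℝ) * Real.log n - ((n : ℝ) - 1) * Real.log ((n : ℝ) - 1)) := by
  set m := n - 1 with hm
  have hmn : n = m + 1 := by omega
  have hm1 : 1 ≤ m := by omega
  have hcast : ((n : ℝ) - 1) = (m : ℝ) := by rw [hmn]; push_cast; ring
  set f : ℕ → ℝ := fun j =>
    ∑ i ∈ Finset.Icc 1 (n - 1),
      ((1 : ℝ) / ((j : ℝ) + (i : ℝ) / n) - 1 / ((j : ℝ) + (i : ℝ) / ((n : ℝ) - 1))) with hf
  have hnonneg : ∀ j, 0 ≤ f j := by
    intro j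
    apply Finset.sum_nonneg
    intro i hi
    have hi1 : (1 : ℝ) ≤ (i : ℝ) := by
      exact_mod_cast (Finset.mem_Icc.mp hi).1
    have hn' : (0 : ℝ) < n := by positivity
    have hm' : (0 : ℝ) < (n : ℝ) - 1 := by rw [hcast]; exact_mod_cast hm1
    have h1 : (0 : ℝ) < (j : ℝ) + (i : ℝ) / n := by positivity
    have h2 : (0 : ℝ) < (j : ℝ) + (i : ℝ) / ((n : ℝ) - 1) := by positivity
    have hle : (i : ℝ) / n ≤ (i : ℝ) / ((n : ℝ) - 1) :=
      div_le_div_of_nonneg_left (by linarith) hm' (by linarith)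
    have hle2 : (j : ℝ) + (i : ℝ) / n ≤ (j : ℝ) + (i : ℝ) / ((n : ℝ) - 1) := by linarith
    have := one_div_le_one_div_of_le h1 hle2
    linarith
  rw [hasSum_iff_tendsto_nat_of_nonneg hnonneg]
  -- partial sum formula
  have hpartial : ∀ J : ℕ, ∑ j ∈ Finset.range J, f j =
      (n : ℝ) * (harmonic (n * J) : ℝ) - (harmonic J : ℝ)
        - (m : ℝ) * (harmonic (m * J) : ℝ) := by
    intro J
    induction J with
    | zero => simp
    | succ J ih =>
        rw [Finset.sum_range_succ, ih]
        simp only [hf]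
        have e1 : ∑ i ∈ Finset.Icc 1 (n - 1), (1 : ℝ) / ((J : ℝ) + (i : ℝ) / n) =
            (n : ℝ) * ((harmonic (n * J + m) : ℝ) - (harmonic (n * J) : ℝ)) :=
          harmInnerSum n J m (by omega)
        have e2 : ∑ i ∈ Finset.Icc 1 (n - 1), (1 : ℝ) / ((J : ℝ) + (i : ℝ) / ((n : ℝ) - 1)) =
            (m : ℝ) * ((harmonic (m * J + m) : ℝ) - (harmonic (m * J) : ℝ)) := by
          rw [hcast]; exact harmInnerSum m J m hm1
        rw [Finset.sum_sub_distrib, e1, e2]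
        have h3 : n * (J + 1) = (n * J + m) + 1 := by rw [Nat.mul_succ, hmn, ← Nat.add_assoc]
        have h4 : m * (J + 1) = m * J + m := by ring
        have h5 : (harmonic (n * (J + 1)) : ℝ) =
            (harmonic (n * J + m) : ℝ) + 1 / ((n : ℝ) * (J + 1)) := by
          rw [h3, harmonic_succ]
          push_cast [← h3]
          ring
        have h6 : (harmonic (J + 1) : ℝ) = (harmonic J : ℝ) + 1 / ((J : ℝ) + 1) := by
          rw [harmonic_succ]; push_cast; ring
        have hn0 : (0 : ℝ) < n := by positivity
        have hJ1 : (0 : ℝ) < (J : ℝ) + 1 := by positivity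
        have h7 : (n : ℝ) * (1 / ((n : ℝ) * (J + 1))) = 1 / ((J : ℝ) + 1) := by
          rw [mul_one_div, div_eq_div_iff (by positivity) (by positivity)]
          ring
        rw [h4]
        push_cast [h5, h6]
        push_cast at h7
        linarith [h7]
  refine Tendsto.congr (fun J => (hpartial J).symm) ?_
  -- limit computation
  have hton : Tendsto (fun J : ℕ => n * J) atTop atTop :=
    tendsto_atTop_mono (fun J => Nat.le_mul_of_pos_left J (by omega)) tendsto_id
  have htom : Tendsto (fun J : ℕ => m * J) atTop atTop :=
    tendsto_atTop_mono (fun J => Nat.le_mul_of_pos_left J (by omega)) tendsto_id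
  have t1 : Tendsto (fun J : ℕ => (harmonic (n * J) : ℝ) - Real.log (n * J)) atTop
      (𝓝 eulerMascheroniConstant) := by
    have := Real.tendsto_harmonic_sub_log.comp hton
    simp only [Function.comp_def] at this
    push_cast at this
    exact this
  have t2 : Tendsto (fun J : ℕ => (harmonic (m * J) : ℝ) - Real.log (m * J)) atTop
      (𝓝 eulerMascheroniConstant) := by
    have := Real.tendsto_harmonic_sub_log.comp htom
    simp only [Function.comp_def] at this
    push_cast at this
    exact this
  have t3 : Tendsto (fun J : ℕ => (harmonic J : ℝ) - Real.log J) atTop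
      (𝓝 eulerMascheroniConstant) := Real.tendsto_harmonic_sub_log
  have tg : Tendsto (fun J : ℕ =>
      (n : ℝ) * ((harmonic (n * J) : ℝ) - Real.log (n * J))
        - ((harmonic J : ℝ) - Real.log J)
        - (m : ℝ) * ((harmonic (m * J) : ℝ) - Real.log (m * J))
        + ((n : ℝ) * Real.log n - ((n : ℝ) - 1) * Real.log ((n : ℝ) - 1))) atTop
      (𝓝 ((n : ℝ) * Real.log n - ((n : ℝ) - 1) * Real.log ((n : ℝ) - 1))) := by
    have := (((t1.const_mul (n : ℝ)).sub t3).sub (t2.const_mul (m : ℝ))).add_const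
      ((n : ℝ) * Real.log n - ((n : ℝ) - 1) * Real.log ((n : ℝ) - 1))
    have hz : (n : ℝ) * eulerMascheroniConstant - eulerMascheroniConstant
        - (m : ℝ) * eulerMascheroniConstant = 0 := by
      rw [hcast.symm]; ring
    rw [hz, zero_add] at this
    exact this
  refine tg.congr' ?_
  filter_upwards [eventually_ge_atTop 1] with J hJ
  have hJ0 : (0 : ℝ) < J := by exact_mod_cast hJ
  have hn0 : (0 : ℝ) < n := by positivity
  have hm0 : (0 : ℝ) < m := by exact_mod_cast hm1
  have l1 : Real.log ((n : ℝ) * J) = Real.log n + Real.log J :=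
    Real.log_mul hn0.ne' hJ0.ne'
  have l2 : Real.log ((m : ℝ) * J) = Real.log m + Real.log J :=
    Real.log_mul hm0.ne' hJ0.ne'
  have hnm : (n : ℝ) = (m : ℝ) + 1 := by rw [hmn]; push_cast; ring
  rw [l1, l2, hcast, hnm]
  ring
end

section
/- Suppose k = k(t) and n = n(t) are sequences of positive integers with k ≤ n, k → ∞, and k = o(n) as t → ∞. Then ω(C(n,k)) = o(n/log n) as t → ∞. -/
open Filter Asymptotics Finset

/-- `k^k / k! ≤ e^k`. -/
lemma aux_pow_div_factorial_le_exp (b : ℝ) (hb : 0 ≤ b) (m : ℕ) :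
    b ^ m / m.factorial ≤ Real.exp b := by
  have h1 : b ^ m / m.factorial ≤ ∑ i ∈ Finset.range (m + 1), b ^ i / i.factorial :=
    Finset.single_le_sum (f := fun i => b ^ i / (i.factorial : ℝ))
      (fun i _ => by positivity) (Finset.self_mem_range_succ m)
  exact h1.trans (Real.sum_le_exp_of_nonneg hb _)

/-- Entropy-type bound: `log C(n,k) ≤ k (log n - log k + 1)`. -/
lemma aux_log_choose_le (n k : ℕ) (hk1 : 1 ≤ k) (hkn : k ≤ n) :
    Real.log (n.choose k) ≤ k * (Real.log n - Real.log k + 1) := by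
  have hb : (1 : ℝ) ≤ (k : ℝ) := by exact_mod_cast hk1
  have hb0 : (0 : ℝ) < (k : ℝ) := by linarith
  have ha0 : (0 : ℝ) < (n : ℝ) := lt_of_lt_of_le hb0 (by exact_mod_cast hkn)
  have hfac : (0 : ℝ) < (k.factorial : ℝ) := by exact_mod_cast k.factorial_pos
  have h1 : ((n.choose k : ℝ)) ≤ (n : ℝ) ^ k / k.factorial := Nat.choose_le_pow_div k n
  have h2 : (k : ℝ) ^ k / k.factorial ≤ Real.exp k :=
    aux_pow_div_factorial_le_exp _ hb0.le k
  have h3 : (n : ℝ) ^ k / k.factorial = ((n : ℝ) / k) ^ k * ((k : ℝ) ^ k / k.factorial) := by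
    field_simp
    rw [div_pow, div_mul_cancel₀ _ (pow_ne_zero _ hb0.ne')]
  have h4 : ((n.choose k : ℝ)) ≤ ((n : ℝ) / k) ^ k * Real.exp k := by
    calc ((n.choose k : ℝ)) ≤ (n : ℝ) ^ k / k.factorial := h1
      _ = ((n : ℝ) / k) ^ k * ((k : ℝ) ^ k / k.factorial) := h3
      _ ≤ ((n : ℝ) / k) ^ k * Real.exp k := by
          apply mul_le_mul_of_nonneg_left h2; positivity
  have hc0 : (0 : ℝ) < (n.choose k : ℝ) := by
    exact_mod_cast Nat.choose_pos hkn
  have := Real.log_le_log hc0 h4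
  rw [Real.log_mul (by positivity) (Real.exp_ne_zero _), Real.log_exp, Real.log_pow,
    Real.log_div ha0.ne' hb0.ne'] at this
  calc Real.log (n.choose k) ≤ k * (Real.log n - Real.log k) + k := this
    _ = k * (Real.log n - Real.log k + 1) := by ring

/-- Splitting prime factors at `√n`:
`ω(C(n,k)) ≤ (√n + 2) + 2 log C(n,k) / log n`. -/
lemma aux_omega_bound (n k : ℕ) (h2 : 2 ≤ n) (hkn : k ≤ n) (hk1 : 1 ≤ k) :
    (((n.choose k).primeFactors.card : ℝ)) ≤
      (Real.sqrt n + 2) + 2 * Real.log (n.choose k) / Real.log n := by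
  set N := n.choose k with hN
  have hN1 : 1 ≤ N := Nat.choose_pos hkn
  set T := Nat.sqrt n with hT
  have hT1 : 1 ≤ T := by
    rw [hT]
    exact Nat.le_sqrt.2 (by omega)
  classical
  set S1 := N.primeFactors.filter (fun p => p ≤ T) with hS1
  set S2 := N.primeFactors.filter (fun p => ¬ p ≤ T) with hS2
  have hsplit : S1.card + S2.card = N.primeFactors.card :=
    Finset.card_filter_add_card_filter_not _
  -- small primes
  have hcard1 : S1.card ≤ T + 1 := by
    have : S1 ⊆ Finset.range (T + 1) := by
      intro p hp
      rw [hS1, Finset.mem_filter] at hp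
      exact Finset.mem_range.2 (Nat.lt_succ_of_le hp.2)
    simpa using Finset.card_le_card this
  -- large primes
  have hdvd : ∏ p ∈ S2, p ∣ N :=
    (Finset.prod_dvd_prod_of_subset S2 N.primeFactors id (Finset.filter_subset _ _)).trans
      (Nat.prod_primeFactors_dvd N)
  have hpow : (T + 1) ^ S2.card ≤ N := by
    refine le_trans ?_ (Nat.le_of_dvd hN1 hdvd)
    exact Finset.pow_card_le_prod S2 id (T + 1) (fun p hp => by
      rw [hS2, Finset.mem_filter] at hp
      simp only [id_eq]; omega)
  -- pass to logs
  have hlogn : (0 : ℝ) < Real.log n := Real.log_pos (by exact_mod_cast h2)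
  have hlogT : (0 : ℝ) < Real.log (T + 1) := Real.log_pos (by exact_mod_cast by omega)
  have hlogN0 : (0 : ℝ) ≤ Real.log N :=
    Real.log_nonneg (by exact_mod_cast hN1)
  have hlogpow : (S2.card : ℝ) * Real.log (T + 1) ≤ Real.log N := by
    have := Real.log_le_log (by positivity) (show (((T+1)^S2.card : ℕ) : ℝ) ≤ (N : ℝ) by
      exact_mod_cast hpow)
    rwa [Nat.cast_pow, Real.log_pow, Nat.cast_add, Nat.cast_one] at this
  have hn_lt : (n : ℝ) ≤ ((T : ℝ) + 1) ^ 2 := by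
    have := Nat.lt_succ_sqrt n
    have : (n : ℝ) < ((T + 1 : ℕ) : ℝ) * ((T + 1 : ℕ) : ℝ) := by exact_mod_cast this
    push_cast at this ⊢
    nlinarith
  have hloghalf : Real.log n ≤ 2 * Real.log (T + 1) := by
    have := Real.log_le_log (by positivity : (0:ℝ) < (n:ℝ)) hn_lt
    rwa [Real.log_pow, Nat.cast_ofNat] at this
  have hcard2 : (S2.card : ℝ) ≤ 2 * Real.log N / Real.log n := by
    rw [le_div_iff₀ hlogn]
    calc (S2.card : ℝ) * Real.log n ≤ (S2.card : ℝ) * (2 * Real.log (T + 1)) := by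
          apply mul_le_mul_of_nonneg_left hloghalf; positivity
      _ = 2 * ((S2.card : ℝ) * Real.log (T + 1)) := by ring
      _ ≤ 2 * Real.log N := by linarith
  -- T + 1 ≤ √n + 2
  have hTle : ((T : ℝ) + 1) ≤ Real.sqrt n + 2 := by
    have h1 : (T : ℝ) ≤ Real.sqrt n := by
      rw [hT]
      refine (Real.le_sqrt (by positivity) (by positivity)).2 ?_
      exact_mod_cast Nat.sqrt_le' n
    linarith
  have : ((N.primeFactors.card : ℝ)) = (S1.card : ℝ) + (S2.card : ℝ) := by
    exact_mod_cast (congrArg (Nat.cast (R := ℝ)) hsplit).symm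
  rw [this]
  have h1 : (S1.card : ℝ) ≤ (T : ℝ) + 1 := by exact_mod_cast hcard1
  linarith

/-- Division trick: to show `f = o(n / log n)` it suffices that `f * log n = o(n)`. -/
lemma aux_div_log {f : ℕ → ℝ} {n : ℕ → ℕ}
    (h : (fun t => f t * Real.log (n t)) =o[atTop] (fun t => (n t : ℝ)))
    (hL : ∀ᶠ t in atTop, Real.log (n t) ≠ 0) :
    f =o[atTop] (fun t => (n t : ℝ) / Real.log (n t)) := by
  have h2 := h.mul_isBigO (isBigO_refl (fun t => (Real.log (n t))⁻¹) atTop)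
  refine h2.congr' ?_ ?_
  · filter_upwards [hL] with t ht
    field_simp
  · filter_upwards with t
    rw [div_eq_mul_inv]

open Filter Asymptotics in
theorem stmt_19 (k n : ℕ → ℕ) (hpos : ∀ t, 1 ≤ k t) (hkn : ∀ t, k t ≤ n t)
    (hk : Tendsto k atTop atTop)
    (hko : (fun t => (k t : ℝ)) =o[atTop] (fun t => (n t : ℝ))) :
    (fun t => (((n t).choose (k t)).primeFactors.card : ℝ))
      =o[atTop] (fun t => (n t : ℝ) / Real.log (n t)) := by
  have hn : Tendsto n atTop atTop := tendsto_atTop_mono hkn hk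
  have hnR : Tendsto (fun t => (n t : ℝ)) atTop atTop :=
    tendsto_natCast_atTop_atTop.comp hn
  have hev2 : ∀ᶠ t in atTop, 2 ≤ n t := hn.eventually_ge_atTop 2
  have hLpos : ∀ᶠ t in atTop, 0 < Real.log (n t) := by
    filter_upwards [hev2] with t ht
    exact Real.log_pos (by exact_mod_cast ht)
  have hLne : ∀ᶠ t in atTop, Real.log (n t) ≠ 0 := by
    filter_upwards [hLpos] with t ht; exact ht.ne'
  -- Part A : √n + 2 = o(n / log n)
  have hOA : (fun t => Real.sqrt (n t) + 2) =O[atTop] (fun t => Real.sqrt (n t)) := by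
    rw [isBigO_iff]
    refine ⟨2, ?_⟩
    filter_upwards [hn.eventually_ge_atTop 4] with t ht
    have h4 : (4 : ℝ) ≤ (n t : ℝ) := by exact_mod_cast ht
    have hs : (2 : ℝ) ≤ Real.sqrt (n t) := by
      refine (Real.le_sqrt (by norm_num) (by positivity)).2 (by nlinarith)
    rw [Real.norm_eq_abs, Real.norm_eq_abs, abs_of_nonneg (by positivity),
      abs_of_nonneg (by positivity)]
    linarith
  have hoL : (fun t => Real.log (n t)) =o[atTop] (fun t => Real.sqrt (n t)) := by
    have := (isLittleO_log_rpow_atTop (by norm_num : (0:ℝ) < 1/2)).comp_tendsto hnR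
    refine this.congr' (by rfl) ?_
    filter_upwards with t
    simp [Function.comp, Real.sqrt_eq_rpow]
  have hA : (fun t => (Real.sqrt (n t) + 2) * Real.log (n t)) =o[atTop]
      (fun t => (n t : ℝ)) := by
    have := hOA.mul_isLittleO hoL
    refine this.congr' (by rfl) ?_
    filter_upwards with t
    exact Real.mul_self_sqrt (by positivity)
  have hG1 : (fun t => Real.sqrt (n t) + 2) =o[atTop]
      (fun t => (n t : ℝ) / Real.log (n t)) := aux_div_log hA hLne
  -- Part B : 2 log C(n,k) = o(n)
  set r : ℕ → ℝ := fun t => (k t : ℝ) / (n t : ℝ) with hrdef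
  have hk1R : ∀ t, (1 : ℝ) ≤ (k t : ℝ) := fun t => by exact_mod_cast hpos t
  have hnposR : ∀ t, (0 : ℝ) < (n t : ℝ) := fun t =>
    lt_of_lt_of_le one_pos ((hk1R t).trans (by exact_mod_cast hkn t))
  have hrpos : ∀ t, 0 < r t := fun t => div_pos (lt_of_lt_of_le one_pos (hk1R t)) (hnposR t)
  have hr0 : Tendsto r atTop (nhds 0) := hko.tendsto_div_nhds_zero
  have hs : Tendsto (fun t => (r t)⁻¹) atTop atTop := by
    refine Filter.Tendsto.inv_tendsto_nhdsGT_zero ?_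
    refine tendsto_nhdsWithin_of_tendsto_nhds_of_eventually_within _ hr0 ?_
    filter_upwards with t
    exact hrpos t
  have hrlog : Tendsto (fun t => r t * Real.log (r t)) atTop (nhds 0) := by
    have h1 : Tendsto (fun x : ℝ => Real.log x / id x) atTop (nhds 0) :=
      Real.isLittleO_log_id_atTop.tendsto_div_nhds_zero
    have h2 := h1.comp hs
    have h3 : Tendsto (fun t => - (r t * Real.log (r t))) atTop (nhds 0) := by
      refine h2.congr ?_
      intro t
      have hrt := hrpos t
      simp only [Function.comp, id_eq, Real.log_inv]
      field_simp
    have := h3.neg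
    simpa using this
  have hD : (fun t => 2 * (k t : ℝ) * (Real.log (n t) - Real.log (k t) + 1)) =o[atTop]
      (fun t => (n t : ℝ)) := by
    rw [isLittleO_iff_tendsto' (Eventually.of_forall fun t h => absurd h (hnposR t).ne')]
    have hlim : Tendsto (fun t => 2 * (r t - r t * Real.log (r t))) atTop (nhds 0) := by
      have := ((hr0.sub hrlog).const_mul (2 : ℝ))
      simpa using this
    refine hlim.congr fun t => ?_
    have hkne : (k t : ℝ) ≠ 0 := (lt_of_lt_of_le one_pos (hk1R t)).ne'
    have hnne : (n t : ℝ) ≠ 0 := (hnposR t).ne'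
    rw [hrdef]
    simp only
    rw [Real.log_div hkne hnne]
    field_simp
    ring
  have hB : (fun t => 2 * Real.log ((n t).choose (k t))) =o[atTop]
      (fun t => (n t : ℝ)) := by
    refine IsBigO.trans_isLittleO ?_ hD
    rw [isBigO_iff]
    refine ⟨1, ?_⟩
    filter_upwards with t
    have hC1 : (1 : ℝ) ≤ ((n t).choose (k t) : ℝ) := by
      exact_mod_cast Nat.choose_pos (hkn t)
    have hlogC : 0 ≤ Real.log ((n t).choose (k t)) := Real.log_nonneg hC1
    have hble := aux_log_choose_le (n t) (k t) (hpos t) (hkn t)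
    have hDt : 0 ≤ 2 * (k t : ℝ) * (Real.log (n t) - Real.log (k t) + 1) := by nlinarith
    rw [Real.norm_eq_abs, Real.norm_eq_abs, abs_of_nonneg (by positivity),
      abs_of_nonneg hDt, one_mul]
    nlinarith
  have hG2 : (fun t => 2 * Real.log ((n t).choose (k t)) / Real.log (n t)) =o[atTop]
      (fun t => (n t : ℝ) / Real.log (n t)) := by
    refine aux_div_log ?_ hLne
    refine hB.congr' ?_ (by rfl)
    filter_upwards [hLne] with t ht
    field_simp
  have hG := hG1.add hG2
  refine IsBigO.trans_isLittleO ?_ hG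
  rw [isBigO_iff]
  refine ⟨1, ?_⟩
  filter_upwards [hev2] with t ht
  have hbound := aux_omega_bound (n t) (k t) ht (hkn t) (hpos t)
  have h0 : (0 : ℝ) ≤ (((n t).choose (k t)).primeFactors.card : ℝ) := by positivity
  rw [Real.norm_eq_abs, Real.norm_eq_abs, abs_of_nonneg h0, one_mul]
  exact hbound.trans (le_abs_self _)
end
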